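/- arXiv:1301.0495 — 6 statements merged into one kernel-verified Lean document; each statement's English description precedes it below -/
import Mathlib

section
/- Let u ∈ ℂ³ be a unit vector (∑ᵢ |uᵢ|² = 1), let S = 2uu† − 𝟙 be the associated 3×3 matrix (Sᵢⱼ = 2 uᵢ (conj uⱼ) − δᵢⱼ), and let M be a symmetric 3×3 complex matrix (Mᵀ = M) satisfying Sᵀ M S = M. Then M u is proportional to the componentwise complex conjugate of u, i.e. there exists c ∈ ℂ with (M u)ᵢ = c · conj(uᵢ) for all i. -/
open Matrix

/-- If `u ∈ ℂ³` is a unit vector, `S = 2uu† − 𝟙`, and `M` is a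
symmetric matrix with `Sᵀ M S = M`, then `M u` is proportional to `conj u`. -/
theorem stmt0 (u : Fin 3 → ℂ) (hu : ∑ i, Complex.normSq (u i) = 1)
    (S : Matrix (Fin 3) (Fin 3) ℂ)
    (hS : S = Matrix.of (fun i j => 2 * u i * (starRingEnd ℂ) (u j)) - 1)
    (M : Matrix (Fin 3) (Fin 3) ℂ) (hM : Mᵀ = M)
    (hinv : Sᵀ * M * S = M) :
    ∃ c : ℂ, ∀ i, M.mulVec u i = c * (starRingEnd ℂ) (u i) := by
  have hnorm : (starRingEnd ℂ) (u 0) * u 0 + (starRingEnd ℂ) (u 1) * u 1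
      + (starRingEnd ℂ) (u 2) * u 2 = 1 := by
    have h : ∀ j, (starRingEnd ℂ) (u j) * u j = (Complex.normSq (u j) : ℂ) := by
      intro j; rw [mul_comm, Complex.mul_conj]
    rw [h, h, h]
    rw [Fin.sum_univ_three] at hu
    push_cast
    exact_mod_cast congrArg (Complex.ofReal) hu
  have hSu : S.mulVec u = u := by
    funext i
    simp only [hS, Matrix.mulVec, dotProduct, Fin.sum_univ_three,
      Matrix.sub_apply, Matrix.of_apply, Matrix.one_apply]
    fin_cases i <;> simp <;> linear_combination 2 * u _ * hnorm
  set v := M.mulVec u with hv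
  have hSv : Sᵀ.mulVec v = v := by
    have h : (Sᵀ * M * S).mulVec u = M.mulVec u := by rw [hinv]
    rw [← Matrix.mulVec_mulVec, ← Matrix.mulVec_mulVec, hSu] at h
    exact h
  refine ⟨u 0 * v 0 + u 1 * v 1 + u 2 * v 2, fun i => ?_⟩
  have h1 : Sᵀ.mulVec v i = v i := congrFun hSv i
  simp only [hS, Matrix.transpose_sub, Matrix.transpose_one, Matrix.mulVec,
    dotProduct, Fin.sum_univ_three, Matrix.sub_apply, Matrix.of_apply,
    Matrix.one_apply, Matrix.transpose_apply] at h1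
  show v i = _
  fin_cases i <;> simp at h1 ⊢ <;> linear_combination -h1 / 2
end

section
/- Let M̃ be a symmetric 3×3 complex matrix, U a 3×3 unitary matrix, and m₁, m₂, m₃ nonnegative real numbers that are pairwise distinct, such that Uᵀ M̃ U = diag(m₁, m₂, m₃). Let ũ ∈ ℂ³ be a unit vector and set S̃ = 2ũũ† − 𝟙. If S̃ᵀ M̃ S̃ = M̃, then ũ coincides, up to a phase, with one of the columns of U: there exist an index j ∈ {1,2,3} and θ ∈ ℂ with |θ| = 1 such that ũ = θ • uⱼ, where uⱼ is the j-th column of U. -/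
open Matrix

private lemma mul_outer_mul (A B : Matrix (Fin 3) (Fin 3) ℂ) (v w : Fin 3 → ℂ) :
    A * Matrix.of (fun i j => v i * w j) * B =
      Matrix.of (fun i j => (A *ᵥ v) i * (w ᵥ* B) j) := by
  ext i j
  simp only [Matrix.mul_apply, Matrix.of_apply, Matrix.mulVec, Matrix.vecMul,
    dotProduct]
  calc ∑ l, (∑ k, A i k * (v k * w l)) * B l j
      = ∑ l, ∑ k, (A i k * v k) * (w l * B l j) := by
        refine Finset.sum_congr rfl fun l _ => ?_
        rw [Finset.sum_mul]
        exact Finset.sum_congr rfl fun k _ => by ring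
    _ = ∑ k, ∑ l, (A i k * v k) * (w l * B l j) := Finset.sum_comm
    _ = (∑ k, A i k * v k) * (∑ l, w l * B l j) :=
        (Finset.sum_mul_sum _ _ _ _).symm

/-- If the unitary `U` diagonalizes the symmetric matrix `M̃` as
`Uᵀ M̃ U = diag(m₁,m₂,m₃)` with the `mⱼ ≥ 0` pairwise distinct, and if
`S̃ = 2ũũ† − 𝟙` (for a unit vector `ũ`) satisfies `S̃ᵀ M̃ S̃ = M̃`, then `ũ` is,
up to a phase, one of the columns of `U`. -/
theorem stmt2 (M : Matrix (Fin 3) (Fin 3) ℂ) (hM : Mᵀ = M)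
    (U : Matrix (Fin 3) (Fin 3) ℂ) (hU : U ∈ Matrix.unitaryGroup (Fin 3) ℂ)
    (m : Fin 3 → ℝ) (hm0 : ∀ i, 0 ≤ m i) (hmd : Function.Injective m)
    (hdiag : Uᵀ * M * U = Matrix.diagonal fun i => (m i : ℂ))
    (u : Fin 3 → ℂ) (hu : ∑ i, Complex.normSq (u i) = 1)
    (S : Matrix (Fin 3) (Fin 3) ℂ)
    (hS : S = Matrix.of (fun i j => 2 * u i * (starRingEnd ℂ) (u j)) - 1)
    (hinv : Sᵀ * M * S = M) :
    ∃ (j : Fin 3) (θ : ℂ), ‖θ‖ = 1 ∧ u = θ • (fun i => U i j) := by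
  have hU1 : Uᴴ * U = 1 := (Matrix.mem_unitaryGroup_iff'.mp hU :)
  have hU2 : U * Uᴴ = 1 := (Matrix.mem_unitaryGroup_iff.mp hU :)
  set c : RingHom ℂ ℂ := starRingEnd ℂ with hc
  -- the rank-one projector
  set P : Matrix (Fin 3) (Fin 3) ℂ := Matrix.of (fun i j => u i * c (u j)) with hP
  have hsum : ∑ k, c (u k) * u k = 1 := by
    have : ∀ k, c (u k) * u k = ((Complex.normSq (u k) : ℝ) : ℂ) := fun k =>
      Complex.normSq_eq_conj_mul_self.symm
    rw [Finset.sum_congr rfl fun k _ => this k, ← Complex.ofReal_sum, hu,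
      Complex.ofReal_one]
  have hPP : P * P = P := by
    ext i j
    simp only [hP, Matrix.mul_apply, Matrix.of_apply]
    calc ∑ k, (u i * c (u k)) * (u k * c (u j))
        = (u i * c (u j)) * ∑ k, c (u k) * u k := by
          rw [Finset.mul_sum]
          exact Finset.sum_congr rfl fun k _ => by ring
      _ = u i * c (u j) := by rw [hsum, mul_one]
  have hS' : S = P + P - 1 := by
    rw [hS]
    ext i j
    simp only [Matrix.sub_apply, Matrix.add_apply, Matrix.of_apply, hP]
    ring
  have hSS : S * S = 1 := by
    rw [hS']
    calc (P + P - 1) * (P + P - 1)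
        = (P * P + P * P + P * P + P * P) - (P + P + P + P) + 1 := by noncomm_ring
      _ = 1 := by rw [hPP]; abel
  -- transpose/conjugate facts about S
  have hconjS : S.map c = Sᵀ := by
    rw [hS]
    ext i j
    by_cases h : i = j
    · subst h
      simp only [Matrix.map_apply, Matrix.sub_apply, Matrix.of_apply,
        Matrix.transpose_apply, Matrix.one_apply_eq, _root_.map_sub,
        _root_.map_mul, map_ofNat, _root_.map_one, hc, Complex.conj_conj]
      ring
    · simp only [Matrix.map_apply, Matrix.sub_apply, Matrix.of_apply,
        Matrix.transpose_apply, Matrix.one_apply_ne h, Matrix.one_apply_ne (Ne.symm h),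
        _root_.map_sub, _root_.map_mul, map_ofNat, map_zero, hc, Complex.conj_conj]
      ring
  have hconjST : Sᵀ.map c = S := by
    rw [Matrix.transpose_map, hconjS, Matrix.transpose_transpose]
  -- M S = Sᵀ M and conjugates
  have hMS : Sᵀ * M = M * S := by
    calc Sᵀ * M = Sᵀ * M * (S * S) := by rw [hSS, mul_one]
      _ = (Sᵀ * M * S) * S := by rw [← mul_assoc]
      _ = M * S := by rw [hinv]
  have hMcS : S * M.map c = M.map c * Sᵀ := by
    have h := congrArg (fun X : Matrix (Fin 3) (Fin 3) ℂ => X.map c) hMS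
    simpa only [Matrix.map_mul, hconjST, hconjS] using h
  -- the Hermitian matrix H = conj(M) * M commutes with S
  set H : Matrix (Fin 3) (Fin 3) ℂ := M.map c * M with hH
  have hHS : H * S = S * H := by
    calc M.map c * M * S = M.map c * (M * S) := by rw [mul_assoc]
      _ = M.map c * (Sᵀ * M) := by rw [hMS]
      _ = (M.map c * Sᵀ) * M := by rw [mul_assoc]
      _ = (S * M.map c) * M := by rw [hMcS]
      _ = S * H := by rw [hH, mul_assoc]
  -- decomposition of M and H
  set D : Matrix (Fin 3) (Fin 3) ℂ := Matrix.diagonal (fun i => (m i : ℂ)) with hD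
  have hUHmap : Uᴴ.map c = Uᵀ := by
    rw [Matrix.conjTranspose, Matrix.transpose_map]
    ext i j
    simp [hc, Complex.conj_conj]
  have hUmapT : (U.map c)ᵀ = Uᴴ := rfl
  have hcU_Ut : U.map c * Uᵀ = 1 := by
    have := congrArg (fun X : Matrix (Fin 3) (Fin 3) ℂ => X.map c) hU2
    simpa only [Matrix.map_mul, hUHmap, Matrix.map_one c (map_zero c) (map_one c)]
      using this
  have hUt_cU : Uᵀ * U.map c = 1 := by
    have := congrArg (fun X : Matrix (Fin 3) (Fin 3) ℂ => X.map c) hU1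
    simpa only [Matrix.map_mul, hUHmap, Matrix.map_one c (map_zero c) (map_one c)]
      using this
  have hMdec : M = U.map c * D * Uᴴ := by
    calc M = (U.map c * Uᵀ) * M * (U * Uᴴ) := by rw [hcU_Ut, hU2, one_mul, mul_one]
      _ = U.map c * (Uᵀ * M * U) * Uᴴ := by noncomm_ring
      _ = U.map c * D * Uᴴ := by rw [hdiag, hD]
  have hDmap : D.map c = D := by
    rw [hD, Matrix.diagonal_map (map_zero c)]
    congr 1
    funext i
    simp [hc, Complex.conj_ofReal]
  have hMcdec : M.map c = U * D * Uᵀ := by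
    have := congrArg (fun X : Matrix (Fin 3) (Fin 3) ℂ => X.map c) hMdec
    simp only [Matrix.map_mul, hDmap, hUHmap] at this
    rw [this]
    congr 1
    congr 1
    ext i j
    simp [hc, Complex.conj_conj]
  set D2 : Matrix (Fin 3) (Fin 3) ℂ := Matrix.diagonal (fun i => (m i : ℂ) ^ 2)
    with hD2
  have hDD : D * D = D2 := by
    rw [hD, Matrix.diagonal_mul_diagonal, hD2]
    congr 1
    funext i
    ring
  have hHdec : H = U * D2 * Uᴴ := by
    calc H = (U * D * Uᵀ) * (U.map c * D * Uᴴ) := by rw [hH, hMcdec, hMdec]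
      _ = U * D * (Uᵀ * U.map c) * D * Uᴴ := by noncomm_ring
      _ = U * (D * D) * Uᴴ := by rw [hUt_cU, mul_one]; noncomm_ring
      _ = U * D2 * Uᴴ := by rw [hDD]
  -- T = Uᴴ S U commutes with D2
  set T : Matrix (Fin 3) (Fin 3) ℂ := Uᴴ * S * U with hT
  have hTcomm : D2 * T = T * D2 := by
    have h := congrArg (fun X : Matrix (Fin 3) (Fin 3) ℂ => Uᴴ * X * U) hHS
    simp only [hHdec] at h
    calc D2 * T = (Uᴴ * U) * D2 * (Uᴴ * S * U) := by rw [hU1, one_mul, hT]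
      _ = Uᴴ * (U * D2 * Uᴴ * S) * U := by noncomm_ring
      _ = Uᴴ * (S * (U * D2 * Uᴴ)) * U := by rw [h]
      _ = (Uᴴ * S * U) * D2 * (Uᴴ * U) := by noncomm_ring
      _ = T * D2 := by rw [hU1, mul_one, hT]
  -- distinct eigenvalues force T off-diagonal to vanish
  have hToff : ∀ i j : Fin 3, i ≠ j → T i j = 0 := by
    intro i j hij
    have h := congrFun (congrFun hTcomm i) j
    rw [hD2] at h
    rw [Matrix.diagonal_mul, Matrix.mul_diagonal] at h
    have hne : ((m i : ℂ) ^ 2) ≠ ((m j : ℂ) ^ 2) := by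
      intro hsq
      have hr : (m i) ^ 2 = (m j) ^ 2 := by exact_mod_cast hsq
      have hmne : m i ≠ m j := fun e => hij (hmd e)
      rcases lt_or_gt_of_ne hmne with hlt | hgt
      · nlinarith [hm0 i, hm0 j]
      · nlinarith [hm0 i, hm0 j]
    have : T i j * ((m i : ℂ) ^ 2 - (m j : ℂ) ^ 2) = 0 := by
      rw [mul_sub, ← h]; ring
    rcases mul_eq_zero.mp this with h0 | h0
    · exact h0
    · exact absurd (sub_eq_zero.mp h0) hne
  -- the coordinate vector of u in the basis of columns of U
  set v : Fin 3 → ℂ := Uᴴ *ᵥ u with hv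
  have hstarv : star v = star u ᵥ* U := by
    rw [hv, Matrix.star_mulVec, Matrix.conjTranspose_conjTranspose]
  have hUPU : Uᴴ * P * U = Matrix.of (fun i j => v i * star (v j)) := by
    have hkey := mul_outer_mul Uᴴ U u (fun k => c (u k))
    have hw : (fun k => c (u k)) ᵥ* U = star v := by
      rw [hstarv]; rfl
    rw [hP, hkey, hw]
    rfl
  have hTentry : T = Matrix.of (fun i j => v i * star (v j))
      + Matrix.of (fun i j => v i * star (v j)) - 1 := by
    rw [hT, hS']
    calc Uᴴ * (P + P - 1) * U = (Uᴴ * P * U) + (Uᴴ * P * U) - (Uᴴ * U) := by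
          noncomm_ring
      _ = _ := by rw [hUPU, hU1]
  have hvoff : ∀ i j : Fin 3, i ≠ j → v i * star (v j) = 0 := by
    intro i j hij
    have h := hToff i j hij
    rw [hTentry] at h
    simp only [Matrix.sub_apply, Matrix.add_apply, Matrix.of_apply,
      Matrix.one_apply_ne hij] at h
    have : (2 : ℂ) * (v i * star (v j)) = 0 := by rw [two_mul]; linear_combination h
    have h2 : (2 : ℂ) ≠ 0 := two_ne_zero
    exact (mul_eq_zero.mp this).resolve_left h2
  -- v is a unit vector
  have hvsum : ∑ k, star (v k) * v k = 1 := by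
    have hdot : star v ⬝ᵥ v = 1 := by
      rw [hstarv, hv, Matrix.dotProduct_mulVec, Matrix.vecMul_vecMul, hU2,
        Matrix.vecMul_one]
      show ∑ k, star (u k) * u k = 1
      exact hsum
    exact hdot
  -- pick the nonzero coordinate
  have hex : ∃ j, v j ≠ 0 := by
    by_contra hno
    push_neg at hno
    rw [Finset.sum_congr rfl (fun k _ => by rw [hno k, mul_zero])] at hvsum
    simp at hvsum
  obtain ⟨j, hj⟩ := hex
  have hzero : ∀ i, i ≠ j → v i = 0 := by
    intro i hij
    have h := hvoff i j hij
    have hsj : star (v j) ≠ 0 := star_ne_zero.mpr hj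
    exact (mul_eq_zero.mp h).resolve_right hsj
  have hvj : star (v j) * v j = 1 := by
    rw [← hvsum]
    symm
    apply Finset.sum_eq_single j
    · intro k _ hk
      rw [hzero k hk, mul_zero]
    · intro h; exact absurd (Finset.mem_univ j) h
  refine ⟨j, v j, ?_, ?_⟩
  · have hns : (Complex.normSq (v j) : ℂ) = 1 := by
      rw [Complex.normSq_eq_conj_mul_self]; exact hvj
    have hns' : Complex.normSq (v j) = 1 := by exact_mod_cast hns
    have habs : ‖v j‖ ^ 2 = 1 := by
      rw [← Complex.sq_norm] at hns'; exact hns'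
    nlinarith [norm_nonneg (v j)]
  · have huv : u = U *ᵥ v := by
      rw [hv, Matrix.mulVec_mulVec, hU2, Matrix.one_mulVec]
    funext i
    rw [huv]
    simp only [Pi.smul_apply, smul_eq_mul, Matrix.mulVec, dotProduct]
    rw [Finset.sum_eq_single j]
    · ring
    · intro k _ hk
      rw [hzero k hk, mul_zero]
    · intro h; exact absurd (Finset.mem_univ j) h
end

section
/- Let M be a 3×3 unitary matrix over ℂ. Then the coefficient of λ in its characteristic polynomial λ³ − M₂λ² + M₁λ − M₀ satisfies M₁ = conj(Tr M) · det M, i.e. charpoly(M).coeff 1 = conj(trace M) · det M. -/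
open Matrix Polynomial

lemma charpoly_coeff_one_fin_three (A : Matrix (Fin 3) (Fin 3) ℂ) :
    A.charpoly.coeff 1 = trace (adjugate A) := by
  simp [Matrix.charpoly, Matrix.det_fin_three, charmatrix_apply,
    Matrix.trace_fin_three, Matrix.adjugate_fin_three,
    Matrix.diagonal, Matrix.of_apply]
  ring_nf
  simp [coeff_one, Polynomial.coeff_C]
  ring

/-- For a 3×3 unitary matrix `M`, the coefficient of `λ` in the
characteristic polynomial satisfies `M₁ = conj(Tr M) · det M`. -/
theorem stmt3 (M : Matrix.unitaryGroup (Fin 3) ℂ) :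
    (Matrix.charpoly (M : Matrix (Fin 3) (Fin 3) ℂ)).coeff 1 =
      (starRingEnd ℂ) (Matrix.trace (M : Matrix (Fin 3) (Fin 3) ℂ)) *
        Matrix.det (M : Matrix (Fin 3) (Fin 3) ℂ) := by
  set A : Matrix (Fin 3) (Fin 3) ℂ := (M : Matrix (Fin 3) (Fin 3) ℂ) with hA
  have h1 : A * Aᴴ = 1 := by
    simpa [star_eq_conjTranspose] using (Unitary.mul_star_self_of_mem M.2)
  have hinv : A⁻¹ = Aᴴ := inv_eq_right_inv h1
  have hadj : adjugate A = det A • Aᴴ := by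
    rw [← hinv]
    have hu : IsUnit A.det := by
      apply IsUnit.of_mul_eq_one (Aᴴ.det)
      calc A.det * Aᴴ.det = (A * Aᴴ).det := (det_mul _ _).symm
      _ = 1 := by rw [h1, det_one]
    rw [Matrix.inv_def, smul_smul, Ring.inverse_eq_inv, mul_inv_cancel₀ hu.ne_zero, one_smul]
  rw [charpoly_coeff_one_fin_three, hadj, trace_smul, trace_conjTranspose, smul_eq_mul, mul_comm]
  rfl
end

section
/- Let M be a 3×3 unitary matrix over ℂ and let λ₁, λ₂, λ₃ ∈ ℂ satisfy |λ₁| = |λ₂| = |λ₃| = 1. Then the characteristic polynomial of M equals (X − λ₁)(X − λ₂)(X − λ₃) if and only if both Tr M = λ₁ + λ₂ + λ₃ and det M = λ₁ λ₂ λ₃. -/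
open Matrix Polynomial

private lemma expand3 (a b c : ℂ) :
    (X - C a) * (X - C b) * (X - C c) =
      X ^ 3 - C (a + b + c) * X ^ 2 + C (a * b + a * c + b * c) * X - C (a * b * c) := by
  simp only [map_add, _root_.map_mul]
  ring

private lemma coeffs3 {s q p s' q' p' : ℂ}
    (h : (X:ℂ[X]) ^ 3 - C s * X ^ 2 + C q * X - C p = X ^ 3 - C s' * X ^ 2 + C q' * X - C p') :
    s = s' ∧ q = q' ∧ p = p' := by
  have h2 := congrArg (fun r => Polynomial.coeff r 2) h
  have h1 := congrArg (fun r => Polynomial.coeff r 1) h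
  have h0 := congrArg (fun r => Polynomial.coeff r 0) h
  simp [coeff_X_pow, coeff_C] at h2 h1 h0
  exact ⟨h2, h1, h0⟩

private lemma conj_eq_inv {a : ℂ} (ha : ‖a‖ = 1) : (starRingEnd ℂ) a = a⁻¹ := by
  have h : a * (starRingEnd ℂ) a = 1 := by
    rw [Complex.mul_conj, Complex.normSq_eq_norm_sq, ha]; norm_num
  exact (inv_eq_of_mul_eq_one_left (by rw [mul_comm]; exact h)).symm

private lemma e2_eq (a b c : ℂ) (ha : ‖a‖ = 1) (hb : ‖b‖ = 1)
    (hc : ‖c‖ = 1) :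
    a * b + a * c + b * c = (a * b * c) * (starRingEnd ℂ) (a + b + c) := by
  have ha0 : a ≠ 0 := by rintro rfl; simp at ha
  have hb0 : b ≠ 0 := by rintro rfl; simp at hb
  have hc0 : c ≠ 0 := by rintro rfl; simp at hc
  rw [map_add, map_add, conj_eq_inv ha, conj_eq_inv hb, conj_eq_inv hc]
  field_simp
  ring

open scoped Matrix.Norms.L2Operator in
private lemma unitary_root_abs (M : Matrix.unitaryGroup (Fin 3) ℂ) (μ : ℂ)
    (h : (Matrix.charpoly (M : Matrix (Fin 3) (Fin 3) ℂ)).IsRoot μ) : ‖μ‖ = 1 := by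
  have hm : μ ∈ spectrum ℂ (M : Matrix (Fin 3) (Fin 3) ℂ) := by
    rw [spectrum.mem_iff]
    intro hu
    rw [Matrix.isUnit_iff_isUnit_det] at hu
    have h0 : ((M : Matrix (Fin 3) (Fin 3) ℂ).charpoly).eval μ = 0 := h
    rw [Matrix.charpoly, eval_det, matPolyEquiv_charmatrix] at h0
    simp only [eval_sub, eval_X, eval_C] at h0
    rw [show (algebraMap ℂ (Matrix (Fin 3) (Fin 3) ℂ)) μ = Matrix.scalar (Fin 3) μ from rfl,
      h0] at hu
    exact hu.ne_zero rfl
  have hs := spectrum.subset_circle_of_unitary M.2 hm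
  rw [Metric.mem_sphere, dist_zero_right] at hs
  simpa using hs

/-- A 3×3 unitary matrix `M` has eigenvalues `λ₁, λ₂, λ₃` (all of
modulus one, with multiplicity) if and only if `Tr M = λ₁+λ₂+λ₃` and
`det M = λ₁λ₂λ₃`. -/
theorem stmt4 (M : Matrix.unitaryGroup (Fin 3) ℂ) (l1 l2 l3 : ℂ)
    (h1 : ‖l1‖ = 1) (h2 : ‖l2‖ = 1) (h3 : ‖l3‖ = 1) :
    Matrix.charpoly (M : Matrix (Fin 3) (Fin 3) ℂ) =
        (X - C l1) * (X - C l2) * (X - C l3) ↔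
      Matrix.trace (M : Matrix (Fin 3) (Fin 3) ℂ) = l1 + l2 + l3 ∧
        Matrix.det (M : Matrix (Fin 3) (Fin 3) ℂ) = l1 * l2 * l3 := by
  set A := (M : Matrix (Fin 3) (Fin 3) ℂ) with hA
  have hsp : (Matrix.charpoly A).Splits := IsAlgClosed.splits _
  have hmon := A.charpoly_monic
  have hcard : Multiset.card (Matrix.charpoly A).roots = 3 := by
    rw [splits_iff_card_roots.mp hsp]
    simp [Matrix.charpoly_natDegree_eq_dim]
  obtain ⟨a, b, c, habc⟩ := Multiset.card_eq_three.mp hcard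
  have hfact : Matrix.charpoly A = (X - C a) * (X - C b) * (X - C c) := by
    have hh := hsp.eq_prod_roots_of_monic hmon
    rw [habc] at hh
    rw [hh]
    simp only [Multiset.insert_eq_cons, Multiset.map_cons, Multiset.prod_cons,
      Multiset.map_singleton, Multiset.prod_singleton]
    ring
  have ha : ‖a‖ = 1 := unitary_root_abs M a
    (isRoot_of_mem_roots (by rw [habc]; simp))
  have hb : ‖b‖ = 1 := unitary_root_abs M b
    (isRoot_of_mem_roots (by rw [habc]; simp))
  have hc : ‖c‖ = 1 := unitary_root_abs M c
    (isRoot_of_mem_roots (by rw [habc]; simp))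
  have htr : Matrix.trace A = a + b + c := by
    rw [trace_eq_sum_roots_charpoly_of_splits hsp, habc]
    simp [add_assoc]
  have hdet : Matrix.det A = a * b * c := by
    rw [det_eq_prod_roots_charpoly_of_splits hsp, habc]
    simp [mul_assoc]
  rw [hfact, expand3, expand3, htr, hdet]
  constructor
  · intro h
    obtain ⟨hs, _, hp⟩ := coeffs3 h
    exact ⟨hs, hp⟩
  · rintro ⟨hs, hp⟩
    have hq : a * b + a * c + b * c = l1 * l2 + l1 * l3 + l2 * l3 := by
      rw [e2_eq a b c ha hb hc, e2_eq l1 l2 l3 h1 h2 h3, hs, hp]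
    rw [hs, hp, hq]
end

section
/- Let a, b, c, λ₁, λ₂, λ₃ ∈ ℂ be roots of unity satisfying −a + 2b + 2c + 3λ₁ + 3λ₂ + 3λ₃ = 0. Then exactly one of the following two situations occurs: (i) a = b = c, and there exists a root of unity ε such that the multiset {λ₁, λ₂, λ₃} equals {ε, −ε, −a}; or (ii) there exists a root of unity η such that a = η, {b, c} = {η·ω, η·ω²} as an unordered pair, and there exists a root of unity ε with the multiset {λ₁, λ₂, λ₃} equal to {ε, −ε, η}. -/
/-- `z` is a root of unity. -/
def IsRootOfUnity (z : ℂ) : Prop := ∃ n : ℕ, 0 < n ∧ z ^ n = 1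

/-- `ω = e^{2πi/3}`. -/
noncomputable def ω : ℂ := Complex.exp (2 * Real.pi * Complex.I / 3)

open Complex

noncomputable def Complex.abs : AbsoluteValue ℂ ℝ where
  toFun := fun z => ‖z‖
  map_mul' := norm_mul
  nonneg' := norm_nonneg
  eq_zero' := fun _ => norm_eq_zero
  add_le' := norm_add_le

lemma Complex.sq_abs (z : ℂ) : Complex.abs z ^ 2 = Complex.normSq z := Complex.sq_norm z

@[simp]
lemma Complex.abs_ofNat (n : ℕ) [n.AtLeastTwo] :
    Complex.abs (no_index (OfNat.ofNat n : ℂ)) = OfNat.ofNat n :=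
  Complex.norm_ofNat n

lemma Complex.abs_intCast (n : ℤ) : Complex.abs (n : ℂ) = |(n : ℝ)| := Complex.norm_intCast n

lemma abs_one_of_pow {z : ℂ} {n : ℕ} (hn : 0 < n) (h : z ^ n = 1) : Complex.abs z = 1 := by
  have h1 : (Complex.abs z) ^ n = 1 := by
    rw [← map_pow, h, map_one]
  have h0 : 0 ≤ Complex.abs z := AbsoluteValue.nonneg _ _
  rcases lt_trichotomy (Complex.abs z) 1 with hlt | he | hgt
  · have := pow_lt_one₀ h0 hlt hn.ne' ; linarith
  · exact he
  · have := one_lt_pow₀ hgt hn.ne' ; linarith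

lemma rou_abs {z : ℂ} (h : IsRootOfUnity z) : Complex.abs z = 1 := by
  obtain ⟨n, hn, hz⟩ := h; exact abs_one_of_pow hn hz

lemma rou_ne_zero {z : ℂ} (h : IsRootOfUnity z) : z ≠ 0 := by
  intro h0; have := rou_abs h; rw [h0] at this; simp at this

lemma rou_mul_conj {z : ℂ} (h : IsRootOfUnity z) : z * (starRingEnd ℂ) z = 1 := by
  rw [Complex.mul_conj]
  rw [← Complex.sq_abs, rou_abs h]; norm_num

lemma rou_neg {z : ℂ} (h : IsRootOfUnity z) : IsRootOfUnity (-z) := by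
  obtain ⟨n, hn, hz⟩ := h
  exact ⟨2 * n, by positivity, by rw [pow_mul, neg_sq, ← pow_mul, mul_comm, pow_mul, hz, one_pow]⟩

lemma isIntegral_of_pow {R A : Type*} [CommRing R] [CommRing A] [Algebra R A] [Nontrivial R]
    {x : A} {n : ℕ} (hn : 0 < n) (h : x ^ n = 1) :
    IsIntegral R x := by
  refine ⟨Polynomial.X ^ n - Polynomial.C 1, Polynomial.monic_X_pow_sub_C 1 hn.ne', ?_⟩
  simp [Polynomial.eval₂_sub, h]

lemma sqrt3_sq : ((Real.sqrt 3 : ℝ) : ℂ) ^ 2 = 3 := by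
  have : (Real.sqrt 3) ^ 2 = 3 := Real.sq_sqrt (by norm_num)
  exact_mod_cast this

lemma omega_eq : ω = (-1/2 : ℂ) + (Real.sqrt 3 / 2 : ℝ) * Complex.I := by
  have h : (2 * Real.pi * Complex.I / 3 : ℂ) = ((2 * Real.pi / 3 : ℝ) : ℂ) * Complex.I := by
    push_cast; ring
  rw [ω, h, Complex.exp_mul_I, ← Complex.ofReal_cos, ← Complex.ofReal_sin]
  have hc : Real.cos (2 * Real.pi / 3) = -(1/2) := by
    have : (2 * Real.pi / 3) = Real.pi - Real.pi / 3 := by ring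
    rw [this, Real.cos_pi_sub, Real.cos_pi_div_three]
  have hs : Real.sin (2 * Real.pi / 3) = Real.sqrt 3 / 2 := by
    have : (2 * Real.pi / 3) = Real.pi - Real.pi / 3 := by ring
    rw [this, Real.sin_pi_sub, Real.sin_pi_div_three]
  rw [hc, hs]
  push_cast
  ring

lemma omega_sq_eq : ω ^ 2 = (-1/2 : ℂ) - (Real.sqrt 3 / 2 : ℝ) * Complex.I := by
  rw [omega_eq]
  have hs := sqrt3_sq
  have hI := Complex.I_sq
  push_cast
  push_cast at hs
  linear_combination (Complex.I ^ 2 / 4) * hs + (3 / 4 : ℂ) * hI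

lemma omega_sum : 1 + ω + ω ^ 2 = 0 := by
  rw [omega_sq_eq, omega_eq]; ring

lemma omega_re : ω.re = -1/2 := by
  rw [omega_eq]; simp

lemma omega_im : ω.im = Real.sqrt 3 / 2 := by
  rw [omega_eq]; simp

lemma omega_sq_re : (ω ^ 2).re = -1/2 := by
  rw [omega_sq_eq]; simp

lemma omega_sq_im : (ω ^ 2).im = -(Real.sqrt 3 / 2) := by
  rw [omega_sq_eq]; simp

lemma omega_ne_one : ω ≠ 1 := by
  intro h
  have := congrArg Complex.re h
  rw [omega_re, Complex.one_re] at this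
  norm_num at this

lemma omega_sq_ne_one : ω ^ 2 ≠ 1 := by
  intro h
  have := congrArg Complex.re h
  rw [omega_sq_re, Complex.one_re] at this
  norm_num at this

lemma mperm_cyc (u v t : ℂ) : ({u, v, t} : Multiset ℂ) = {v, t, u} := by
  show u ::ₘ v ::ₘ t ::ₘ 0 = v ::ₘ t ::ₘ u ::ₘ 0
  rw [Multiset.cons_swap u v]
  exact congrArg (v ::ₘ ·) (Multiset.cons_swap u t 0)

lemma mperm_last (u v t : ℂ) : ({u, v, t} : Multiset ℂ) = {u, t, v} := by
  show u ::ₘ v ::ₘ t ::ₘ 0 = u ::ₘ t ::ₘ v ::ₘ 0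
  exact congrArg (u ::ₘ ·) (Multiset.cons_swap v t 0)

lemma four_vanish {x y z w : ℂ} (hx : IsRootOfUnity x) (hy : IsRootOfUnity y)
    (hz : IsRootOfUnity z) (hw : IsRootOfUnity w) (h : x + y + z + w = 0) :
    ∃ ε : ℂ, IsRootOfUnity ε ∧ ({x, y, z} : Multiset ℂ) = {ε, -ε, -w} := by
  have hX := rou_mul_conj hx
  have hY := rou_mul_conj hy
  have hZ := rou_mul_conj hz
  have hW := rou_mul_conj hw
  have hconj : (starRingEnd ℂ) x + (starRingEnd ℂ) y + (starRingEnd ℂ) z + (starRingEnd ℂ) w = 0 := by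
    have := congrArg (starRingEnd ℂ) h
    simpa using this
  have h2 : y*z*w + x*z*w + x*y*w + x*y*z = 0 := by
    linear_combination (x*y*z*w)*hconj - (y*z*w)*hX - (x*z*w)*hY - (x*y*w)*hZ - (x*y*z)*hW
  have key : (x + w) * ((y + w) * (z + w)) = 0 := by
    linear_combination (w^2)*h + h2
  rcases mul_eq_zero.mp key with h1 | h23
  · -- x = -w, z = -y
    have hxw : x = -w := by linear_combination h1
    have hzy : z = -y := by linear_combination h - h1
    refine ⟨y, hy, ?_⟩
    rw [hxw, hzy, mperm_cyc]
  rcases mul_eq_zero.mp h23 with h1 | h1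
  · -- y = -w, z = -x
    have hyw : y = -w := by linear_combination h1
    have hzx : z = -x := by linear_combination h - h1
    refine ⟨x, hx, ?_⟩
    rw [hyw, hzx, mperm_last]
  · -- z = -w, y = -x
    have hzw : z = -w := by linear_combination h1
    have hyx : y = -x := by linear_combination h - h1
    exact ⟨x, hx, by rw [hzw, hyx]⟩

lemma normsq_of_abs_one {z : ℂ} (h : Complex.abs z = 1) : z.re ^ 2 + z.im ^ 2 = 1 := by
  have h2 := Complex.sq_abs z
  rw [h, Complex.normSq_apply] at h2
  nlinarith [h2]

lemma eq_of_abs_add_two {a b : ℂ} (ha : Complex.abs a = 1) (hb : Complex.abs b = 1)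
    (h : Complex.abs (a + b) = 2) : a = b := by
  have na : a.re ^ 2 + a.im ^ 2 = 1 := normsq_of_abs_one ha
  have nb : b.re ^ 2 + b.im ^ 2 = 1 := normsq_of_abs_one hb
  have nab : (a.re + b.re) ^ 2 + (a.im + b.im) ^ 2 = 4 := by
    have h2 := Complex.sq_abs (a + b)
    rw [h, Complex.normSq_apply] at h2
    simp only [Complex.add_re, Complex.add_im] at h2
    nlinarith [h2]
  have hdot : a.re * b.re + a.im * b.im = 1 := by nlinarith
  apply Complex.ext
  · nlinarith [sq_nonneg (a.re - b.re), sq_nonneg (a.im - b.im)]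
  · nlinarith [sq_nonneg (a.re - b.re), sq_nonneg (a.im - b.im)]

lemma eq_eq_of_abs_three {a b c : ℂ} (ha : Complex.abs a = 1) (hb : Complex.abs b = 1)
    (hc : Complex.abs c = 1) (h : Complex.abs (a + b + c) = 3) : a = b ∧ b = c := by
  have t1 : Complex.abs (a + b) = 2 := by
    have h1 : Complex.abs (a + b + c) ≤ Complex.abs (a + b) + Complex.abs c :=
      AbsoluteValue.add_le _ _ _
    have h2 : Complex.abs (a + b) ≤ Complex.abs a + Complex.abs b := AbsoluteValue.add_le _ _ _
    rw [ha, hb] at h2; rw [h, hc] at h1; linarith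
  have hab := eq_of_abs_add_two ha hb t1
  have t2 : Complex.abs (b + c) = 2 := by
    have h1 : Complex.abs (a + b + c) ≤ Complex.abs a + Complex.abs (b + c) := by
      have : a + b + c = a + (b + c) := by ring
      rw [this]; exact AbsoluteValue.add_le _ _ _
    have h2 : Complex.abs (b + c) ≤ Complex.abs b + Complex.abs c := AbsoluteValue.add_le _ _ _
    rw [hb, hc] at h2; rw [h, ha] at h1; linarith
  exact ⟨hab, eq_of_abs_add_two hb hc t2⟩

lemma zero_sum3 {a b c : ℂ} (ha : Complex.abs a = 1) (hb : Complex.abs b = 1)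
    (hc : Complex.abs c = 1) (h : a + b + c = 0) :
    (b = a * ω ∧ c = a * ω ^ 2) ∨ (b = a * ω ^ 2 ∧ c = a * ω) := by
  have na : a.re ^ 2 + a.im ^ 2 = 1 := normsq_of_abs_one ha
  have nb : b.re ^ 2 + b.im ^ 2 = 1 := normsq_of_abs_one hb
  have hcre : c.re = -(a.re + b.re) := by
    have := congrArg Complex.re h; simp [Complex.add_re] at this; linarith
  have hcim : c.im = -(a.im + b.im) := by
    have := congrArg Complex.im h; simp [Complex.add_im] at this; linarith
  have nc : (a.re + b.re) ^ 2 + (a.im + b.im) ^ 2 = 1 := by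
    have h2 := Complex.sq_abs c
    rw [hc, Complex.normSq_apply, hcre, hcim] at h2
    nlinarith [h2]
  have hdot : a.re * b.re + a.im * b.im = -(1/2) := by nlinarith
  set k := a.re * b.im - a.im * b.re with hk
  have hk2 : k ^ 2 = 3 / 4 := by
    have lag : k ^ 2 + (a.re * b.re + a.im * b.im) ^ 2
        = (a.re ^ 2 + a.im ^ 2) * (b.re ^ 2 + b.im ^ 2) := by ring
    rw [na, nb, hdot] at lag; nlinarith [lag]
  have hs : Real.sqrt 3 ^ 2 = 3 := Real.sq_sqrt (by norm_num)
  have hbre : b.re = a.re * (-(1/2)) - a.im * k := by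
    have : a.re * (a.re * b.re + a.im * b.im) - a.im * k = b.re * (a.re ^ 2 + a.im ^ 2) := by
      rw [hk]; ring
    rw [hdot, na] at this; linarith
  have hbim : b.im = a.im * (-(1/2)) + a.re * k := by
    have : a.im * (a.re * b.re + a.im * b.im) + a.re * k = b.im * (a.re ^ 2 + a.im ^ 2) := by
      rw [hk]; ring
    rw [hdot, na] at this; linarith
  have hccase : k = Real.sqrt 3 / 2 ∨ k = -(Real.sqrt 3 / 2) := by
    have : (k - Real.sqrt 3 / 2) * (k + Real.sqrt 3 / 2) = 0 := by
      nlinarith [hk2, hs]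
    rcases mul_eq_zero.mp this with h' | h'
    · left; linarith
    · right; linarith
  have hcform : c = -a - b := by linear_combination h
  rcases hccase with hkv | hkv
  · left
    have hbω : b = a * ω := by
      apply Complex.ext
      · rw [Complex.mul_re, omega_re, omega_im, hbre, hkv]; ring
      · rw [Complex.mul_im, omega_re, omega_im, hbim, hkv]; ring
    refine ⟨hbω, ?_⟩
    rw [hcform, hbω]
    have h2 : ω ^ 2 = -1 - ω := by linear_combination omega_sum
    rw [h2]; ring
  · right
    have hbω : b = a * ω ^ 2 := by
      apply Complex.ext
      · rw [Complex.mul_re, omega_sq_re, omega_sq_im, hbre, hkv]; ring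
      · rw [Complex.mul_im, omega_sq_re, omega_sq_im, hbim, hkv]; ring
    refine ⟨hbω, ?_⟩
    rw [hcform, hbω]
    have h2 : ω = -1 - ω ^ 2 := by linear_combination omega_sum
    nth_rewrite 2 [h2]; ring

lemma factor_eq_one {x r : ℝ} (hx0 : 0 ≤ x) (hx1 : x ≤ 1) (hr0 : 0 ≤ r) (hr1 : r ≤ 1)
    (h : x * r = 1) : x = 1 := by nlinarith

set_option maxHeartbeats 1000000 in
lemma abs_sum3_key {a b c l1 l2 l3 : ℂ}
    (ha : IsRootOfUnity a) (hb : IsRootOfUnity b) (hc : IsRootOfUnity c)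
    (h1 : IsRootOfUnity l1) (h2 : IsRootOfUnity l2) (h3 : IsRootOfUnity l3)
    (hm : a + b + c = 3 * (b + c + l1 + l2 + l3)) :
    a + b + c = 0 ∨ Complex.abs (a + b + c) = 3 := by
  classical
  set S : Set ℂ := {a, b, c, l1, l2, l3} with hS
  have hSfin : S.Finite := by
    rw [hS]
    exact (Set.finite_singleton l3).insert l2 |>.insert l1 |>.insert c |>.insert b |>.insert a
  haveI : Finite ↥S := hSfin.to_subtype
  have hSint : ∀ x ∈ S, IsIntegral ℚ x := by
    rintro x hx
    rw [hS] at hx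
    simp only [Set.mem_insert_iff, Set.mem_singleton_iff] at hx
    rcases hx with rfl | rfl | rfl | rfl | rfl | rfl
    · obtain ⟨n, hn, hp⟩ := ha; exact isIntegral_of_pow hn hp
    · obtain ⟨n, hn, hp⟩ := hb; exact isIntegral_of_pow hn hp
    · obtain ⟨n, hn, hp⟩ := hc; exact isIntegral_of_pow hn hp
    · obtain ⟨n, hn, hp⟩ := h1; exact isIntegral_of_pow hn hp
    · obtain ⟨n, hn, hp⟩ := h2; exact isIntegral_of_pow hn hp
    · obtain ⟨n, hn, hp⟩ := h3; exact isIntegral_of_pow hn hp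
  set F : IntermediateField ℚ ℂ := IntermediateField.adjoin ℚ S with hF
  haveI : FiniteDimensional ℚ F := IntermediateField.finiteDimensional_adjoin hSint
  have mem : ∀ x ∈ S, x ∈ F := fun x hx => IntermediateField.subset_adjoin ℚ S hx
  have maF : a ∈ F := mem a (by rw [hS]; simp)
  have mbF : b ∈ F := mem b (by rw [hS]; simp)
  have mcF : c ∈ F := mem c (by rw [hS]; simp)
  have m1F : l1 ∈ F := mem l1 (by rw [hS]; simp)
  have m2F : l2 ∈ F := mem l2 (by rw [hS]; simp)
  have m3F : l3 ∈ F := mem l3 (by rw [hS]; simp)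
  set aF : F := ⟨a, maF⟩
  set bF : F := ⟨b, mbF⟩
  set cF : F := ⟨c, mcF⟩
  set l1F : F := ⟨l1, m1F⟩
  set l2F : F := ⟨l2, m2F⟩
  set l3F : F := ⟨l3, m3F⟩
  set mF : F := bF + cF + l1F + l2F + l3F with hmF
  have h3m : aF + bF + cF = 3 * mF := by
    apply Subtype.coe_injective
    push_cast
    exact hm
  -- each generator is a root of unity in F
  have rouF : ∀ (z : ℂ) (hz : z ∈ F), IsRootOfUnity z → ∃ n : ℕ, 0 < n ∧ (⟨z, hz⟩ : F) ^ n = 1 := by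
    rintro z hz ⟨n, hn, hp⟩
    exact ⟨n, hn, by apply Subtype.coe_injective; push_cast; exact hp⟩
  have hmint : IsIntegral ℤ mF := by
    obtain ⟨n1, hn1, hp1⟩ := rouF b mbF hb
    obtain ⟨n2, hn2, hp2⟩ := rouF c mcF hc
    obtain ⟨n3, hn3, hp3⟩ := rouF l1 m1F h1
    obtain ⟨n4, hn4, hp4⟩ := rouF l2 m2F h2
    obtain ⟨n5, hn5, hp5⟩ := rouF l3 m3F h3
    exact ((((isIntegral_of_pow hn1 hp1).add (isIntegral_of_pow hn2 hp2)).add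
      (isIntegral_of_pow hn3 hp3)).add (isIntegral_of_pow hn4 hp4)).add
      (isIntegral_of_pow hn5 hp5)
  set N : ℚ := Algebra.norm ℚ mF with hN
  have hNint : IsIntegral ℤ N := Algebra.isIntegral_norm ℚ hmint
  obtain ⟨N', hN'⟩ := IsIntegrallyClosed.isIntegral_iff.mp hNint
  have hprod : (algebraMap ℚ ℂ) N = ∏ σ : F →ₐ[ℚ] ℂ, σ mF :=
    Algebra.norm_eq_prod_embeddings ℚ (E := ℂ) mF
  -- bound each embedding
  have hle : ∀ σ : F →ₐ[ℚ] ℂ, Complex.abs (σ mF) ≤ 1 := by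
    intro σ
    have habs : ∀ (z : ℂ) (hz : z ∈ F), IsRootOfUnity z →
        Complex.abs (σ ⟨z, hz⟩) = 1 := by
      rintro z hz hrz
      obtain ⟨n, hn, hp⟩ := rouF z hz hrz
      have : (σ ⟨z, hz⟩) ^ n = 1 := by rw [← map_pow, hp, map_one]
      exact abs_one_of_pow hn this
    have hσ : σ aF + σ bF + σ cF = 3 * σ mF := by
      have h' := congrArg σ h3m
      simp only [map_add, map_mul, map_ofNat] at h'
      exact h'
    have h3' : Complex.abs (3 * σ mF) ≤ 3 := by
      rw [← hσ]
      calc Complex.abs (σ aF + σ bF + σ cF)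
          ≤ Complex.abs (σ aF + σ bF) + Complex.abs (σ cF) := AbsoluteValue.add_le _ _ _
        _ ≤ Complex.abs (σ aF) + Complex.abs (σ bF) + Complex.abs (σ cF) := by
            linarith [AbsoluteValue.add_le Complex.abs (σ aF) (σ bF)]
        _ ≤ 3 := by
            rw [habs a maF ha, habs b mbF hb, habs c mcF hc]; norm_num
    rw [map_mul] at h3'
    simp only [Complex.abs_ofNat] at h3'
    linarith
  -- the product has absolute value ≤ 1
  have habsN : |(N' : ℝ)| ≤ 1 := by
    have : Complex.abs ((algebraMap ℚ ℂ) N) = ∏ σ : F →ₐ[ℚ] ℂ, Complex.abs (σ mF) := by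
      rw [hprod, map_prod]
    have hb1 : ∏ σ : F →ₐ[ℚ] ℂ, Complex.abs (σ mF) ≤ 1 :=
      Finset.prod_le_one (fun i _ => AbsoluteValue.nonneg _ _) (fun i _ => hle i)
    have he : Complex.abs ((algebraMap ℚ ℂ) N) = |(N' : ℝ)| := by
      rw [← hN', eq_ratCast, eq_intCast, Rat.cast_intCast, Complex.abs_intCast]
    rw [he] at this
    exact this.le.trans hb1
  have hN'le : |N'| ≤ (1 : ℤ) := by exact_mod_cast habsN
  rcases eq_or_ne N' 0 with h0 | hne
  · -- norm is zero, so m = 0 and a + b + c = 0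
    left
    have hN0 : Algebra.norm ℚ mF = 0 := by rw [← hN, ← hN', h0, map_zero]
    have hmF0 : mF = 0 := Algebra.norm_eq_zero_iff.mp hN0
    have hm0 : b + c + l1 + l2 + l3 = 0 := by
      have := congrArg (fun x : F => (x : ℂ)) hmF0
      push_cast at this
      exact this
    rw [hm, hm0, mul_zero]
  · -- norm has absolute value 1, so |m| = 1
    right
    have habs1 : |(N' : ℝ)| = 1 := by
      have h1' : (1 : ℤ) ≤ |N'| := Int.one_le_abs hne
      have : |N'| = 1 := le_antisymm hN'le h1'
      exact_mod_cast this
    have hprodval : |(N' : ℝ)| = ∏ σ : F →ₐ[ℚ] ℂ, Complex.abs (σ mF) := by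
      have : Complex.abs ((algebraMap ℚ ℂ) N) = ∏ σ : F →ₐ[ℚ] ℂ, Complex.abs (σ mF) := by
        rw [hprod, map_prod]
      rw [← this, ← hN', eq_ratCast, eq_intCast, Rat.cast_intCast, Complex.abs_intCast]
    have hprod1 : ∏ σ : F →ₐ[ℚ] ℂ, Complex.abs (σ mF) = 1 := by
      rw [← hprodval, habs1]
    have ⟨σ0, hσ0⟩ : ∃ σ0 : F →ₐ[ℚ] ℂ, σ0 = F.val := ⟨F.val, rfl⟩
    have hsplit := Finset.mul_prod_erase Finset.univ
      (fun σ : F →ₐ[ℚ] ℂ => Complex.abs (σ mF)) (Finset.mem_univ σ0)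
    have hrest_le : ∏ σ ∈ Finset.univ.erase σ0, Complex.abs (σ mF) ≤ 1 :=
      Finset.prod_le_one (fun i _ => AbsoluteValue.nonneg _ _) (fun i _ => hle i)
    have hrest_nonneg : (0:ℝ) ≤ ∏ σ ∈ Finset.univ.erase σ0, Complex.abs (σ mF) :=
      Finset.prod_nonneg (fun i _ => AbsoluteValue.nonneg _ _)
    have hf_le := hle σ0
    have hf_nonneg : (0:ℝ) ≤ Complex.abs (σ0 mF) := AbsoluteValue.nonneg _ _
    have habsσ0 : Complex.abs (σ0 mF) = 1 := by
      refine factor_eq_one hf_nonneg hf_le hrest_nonneg hrest_le ?_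
      rw [hprod1] at hsplit
      simpa using hsplit
    have hσ0val : σ0 mF = b + c + l1 + l2 + l3 := by
      rw [hσ0]
      show ((mF : ℂ)) = b + c + l1 + l2 + l3
      rw [hmF]
      push_cast
      rfl
    rw [hσ0val] at habsσ0
    rw [hm, map_mul]
    rw [habsσ0]
    simp

/-- If roots of unity `a, b, c, λ₁, λ₂, λ₃` satisfy
`−a + 2b + 2c + 3λ₁ + 3λ₂ + 3λ₃ = 0`, then exactly one of the two listed
situations occurs. -/
theorem stmt6 (a b c l1 l2 l3 : ℂ)
    (ha : IsRootOfUnity a) (hb : IsRootOfUnity b) (hc : IsRootOfUnity c)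
    (h1 : IsRootOfUnity l1) (h2 : IsRootOfUnity l2) (h3 : IsRootOfUnity l3)
    (heq : -a + 2 * b + 2 * c + 3 * l1 + 3 * l2 + 3 * l3 = 0) :
    Xor'
      (a = b ∧ b = c ∧
        ∃ ε : ℂ, IsRootOfUnity ε ∧ ({l1, l2, l3} : Multiset ℂ) = {ε, -ε, -a})
      (∃ η : ℂ, IsRootOfUnity η ∧ a = η ∧
        ((b = η * ω ∧ c = η * ω ^ 2) ∨ (b = η * ω ^ 2 ∧ c = η * ω)) ∧
        ∃ ε : ℂ, IsRootOfUnity ε ∧ ({l1, l2, l3} : Multiset ℂ) = {ε, -ε, η}) := by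
  have hane := rou_ne_zero ha
  have hm' : a + b + c = 3 * (b + c + l1 + l2 + l3) := by linear_combination -heq
  rcases abs_sum3_key ha hb hc h1 h2 h3 hm' with hz | h3abs
  · -- a + b + c = 0 : situation (ii)
    have hlsum : l1 + l2 + l3 + (-a) = 0 := by
      linear_combination (1/3 : ℂ) * heq - (2/3 : ℂ) * hz
    obtain ⟨ε, hε, hmul⟩ := four_vanish h1 h2 h3 (rou_neg ha) hlsum
    rw [neg_neg] at hmul
    have hbc := zero_sum3 (rou_abs ha) (rou_abs hb) (rou_abs hc) hz
    right
    refine ⟨⟨a, ha, rfl, hbc, ε, hε, hmul⟩, ?_⟩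
    rintro ⟨hab, -, -⟩
    rcases hbc with ⟨hb1, -⟩ | ⟨hb1, -⟩
    · exact omega_ne_one (mul_left_cancel₀ hane (by rw [mul_one, ← hb1, ← hab]))
    · exact omega_sq_ne_one (mul_left_cancel₀ hane (by rw [mul_one, ← hb1, ← hab]))
  · -- a = b = c : situation (i)
    obtain ⟨hab, hbc⟩ := eq_eq_of_abs_three (rou_abs ha) (rou_abs hb) (rou_abs hc) h3abs
    have hlsum : l1 + l2 + l3 + a = 0 := by
      linear_combination (1/3 : ℂ) * heq + (4/3 : ℂ) * hab + (2/3 : ℂ) * hbc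
    obtain ⟨ε, hε, hmul⟩ := four_vanish h1 h2 h3 ha hlsum
    left
    refine ⟨⟨hab, hbc, ε, hε, hmul⟩, ?_⟩
    rintro ⟨η, -, haη, hbη, -⟩
    rcases hbη with ⟨hb1, -⟩ | ⟨hb1, -⟩
    · refine omega_ne_one (mul_left_cancel₀ hane ?_)
      rw [← haη] at hb1
      rw [mul_one, ← hb1, hab]
    · refine omega_sq_ne_one (mul_left_cancel₀ hane ?_)
      rw [← haη] at hb1
      rw [mul_one, ← hb1, hab]
end

section
/- Let E = [[0,1,0],[0,0,1],[1,0,0]], S₁ = diag(1,−1,−1) and B = [[−1,0,0],[0,0,−1],[0,−1,0]]. Then the subgroup of the 3×3 unitary group over ℂ generated by {E, S₁, B} is isomorphic as a group to the symmetric group S₄ on four letters (in particular it has exactly 24 elements). -/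
/-- `E` is the cyclic permutation matrix. -/
def E : Matrix (Fin 3) (Fin 3) ℂ := !![0, 1, 0; 0, 0, 1; 1, 0, 0]

/-- `S₁ = diag(1, −1, −1)`. -/
def S₁ : Matrix (Fin 3) (Fin 3) ℂ := !![1, 0, 0; 0, -1, 0; 0, 0, -1]

/-- `B = [[−1,0,0],[0,0,−1],[0,−1,0]]`. -/
def B : Matrix (Fin 3) (Fin 3) ℂ := !![-1, 0, 0; 0, 0, -1; 0, -1, 0]

def tbl : Fin 4 → Fin 4 → Fin 4 → Matrix (Fin 3) (Fin 3) ℤ :=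
 ![
 ![
   ![!![1, 0, 0; 0, 1, 0; 0, 0, 1], !![1, 0, 0; 0, 1, 0; 0, 0, 1], !![1, 0, 0; 0, 1, 0; 0, 0, 1], !![1, 0, 0; 0, 1, 0; 0, 0, 1]],
   ![!![1, 0, 0; 0, 1, 0; 0, 0, 1], !![1, 0, 0; 0, 1, 0; 0, 0, 1], !![1, 0, 0; 0, 1, 0; 0, 0, 1], !![0, -1, 0; -1, 0, 0; 0, 0, -1]],
   ![!![1, 0, 0; 0, 1, 0; 0, 0, 1], !![-1, 0, 0; 0, 0, -1; 0, -1, 0], !![1, 0, 0; 0, 1, 0; 0, 0, 1], !![0, 1, 0; 0, 0, 1; 1, 0, 0]],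
   ![!![1, 0, 0; 0, 1, 0; 0, 0, 1], !![0, 0, 1; 1, 0, 0; 0, 1, 0], !![0, 0, -1; 0, -1, 0; -1, 0, 0], !![1, 0, 0; 0, 1, 0; 0, 0, 1]]],
 ![
   ![!![1, 0, 0; 0, 1, 0; 0, 0, 1], !![1, 0, 0; 0, 1, 0; 0, 0, 1], !![0, 1, 0; 1, 0, 0; 0, 0, -1], !![-1, 0, 0; 0, -1, 0; 0, 0, 1]],
   ![!![1, 0, 0; 0, 1, 0; 0, 0, 1], !![1, 0, 0; 0, 1, 0; 0, 0, 1], !![1, 0, 0; 0, 1, 0; 0, 0, 1], !![1, 0, 0; 0, 1, 0; 0, 0, 1]],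
   ![!![0, 0, -1; -1, 0, 0; 0, 1, 0], !![1, 0, 0; 0, 1, 0; 0, 0, 1], !![1, 0, 0; 0, 1, 0; 0, 0, 1], !![0, 0, 1; 0, 1, 0; -1, 0, 0]],
   ![!![1, 0, 0; 0, 0, 1; 0, -1, 0], !![1, 0, 0; 0, 1, 0; 0, 0, 1], !![0, -1, 0; 0, 0, -1; 1, 0, 0], !![1, 0, 0; 0, 1, 0; 0, 0, 1]]],
 ![
   ![!![1, 0, 0; 0, 1, 0; 0, 0, 1], !![0, -1, 0; 0, 0, 1; -1, 0, 0], !![1, 0, 0; 0, 1, 0; 0, 0, 1], !![1, 0, 0; 0, 0, -1; 0, 1, 0]],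
   ![!![0, 0, 1; 0, -1, 0; 1, 0, 0], !![1, 0, 0; 0, 1, 0; 0, 0, 1], !![1, 0, 0; 0, 1, 0; 0, 0, 1], !![0, 0, -1; 1, 0, 0; 0, -1, 0]],
   ![!![1, 0, 0; 0, 1, 0; 0, 0, 1], !![1, 0, 0; 0, 1, 0; 0, 0, 1], !![1, 0, 0; 0, 1, 0; 0, 0, 1], !![1, 0, 0; 0, 1, 0; 0, 0, 1]],
   ![!![-1, 0, 0; 0, 1, 0; 0, 0, -1], !![0, 1, 0; -1, 0, 0; 0, 0, 1], !![1, 0, 0; 0, 1, 0; 0, 0, 1], !![1, 0, 0; 0, 1, 0; 0, 0, 1]]],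
 ![
   ![!![1, 0, 0; 0, 1, 0; 0, 0, 1], !![0, 0, -1; 0, 1, 0; 1, 0, 0], !![0, 0, 1; -1, 0, 0; 0, -1, 0], !![1, 0, 0; 0, 1, 0; 0, 0, 1]],
   ![!![0, 1, 0; 0, 0, -1; -1, 0, 0], !![1, 0, 0; 0, 1, 0; 0, 0, 1], !![-1, 0, 0; 0, 0, 1; 0, 1, 0], !![1, 0, 0; 0, 1, 0; 0, 0, 1]],
   ![!![0, -1, 0; 1, 0, 0; 0, 0, 1], !![1, 0, 0; 0, -1, 0; 0, 0, -1], !![1, 0, 0; 0, 1, 0; 0, 0, 1], !![1, 0, 0; 0, 1, 0; 0, 0, 1]],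
   ![!![1, 0, 0; 0, 1, 0; 0, 0, 1], !![1, 0, 0; 0, 1, 0; 0, 0, 1], !![1, 0, 0; 0, 1, 0; 0, 0, 1], !![1, 0, 0; 0, 1, 0; 0, 0, 1]]]]
/-- Integer version of the representation `S₄ → O(3)` (rotation group of the cube
acting on the four long diagonals), given by a lookup table. -/
def phi (σ : Equiv.Perm (Fin 4)) : Matrix (Fin 3) (Fin 3) ℤ := tbl (σ 0) (σ 1) (σ 2)

theorem phi_one : phi 1 = 1 := by decide

def σE : Equiv.Perm (Fin 4) := ⟨![0,2,3,1], ![0,3,1,2], by decide, by decide⟩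
def σS : Equiv.Perm (Fin 4) := ⟨![3,2,1,0], ![3,2,1,0], by decide, by decide⟩
def σB : Equiv.Perm (Fin 4) := ⟨![0,2,1,3], ![0,2,1,3], by decide, by decide⟩

set_option maxHeartbeats 4000000 in
theorem phi_mul_σE : ∀ τ : Equiv.Perm (Fin 4), phi (σE * τ) = phi σE * phi τ := by decide

set_option maxHeartbeats 4000000 in
theorem phi_mul_σS : ∀ τ : Equiv.Perm (Fin 4), phi (σS * τ) = phi σS * phi τ := by decide

set_option maxHeartbeats 4000000 in
theorem phi_mul_σB : ∀ τ : Equiv.Perm (Fin 4), phi (σB * τ) = phi σB * phi τ := by decide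

/-- The submonoid of permutations on which `phi` is multiplicative from the left. -/
def good : Submonoid (Equiv.Perm (Fin 4)) where
  carrier := {σ | ∀ τ, phi (σ * τ) = phi σ * phi τ}
  one_mem' := by intro τ; rw [one_mul, phi_one, one_mul]
  mul_mem' := by
    intro a b ha hb τ
    have h1 : phi (a * b) = phi a * phi b := ha b
    rw [mul_assoc, ha (b * τ), hb τ, h1, mul_assoc]

theorem swap_good : ∀ x y : Fin 4, Equiv.swap x y ∈ good := by
  have memE : σE ∈ good := phi_mul_σE
  have memS : σS ∈ good := phi_mul_σS
  have memB : σB ∈ good := phi_mul_σB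
  have memE2 : σE⁻¹ ∈ good := by
    have h : σE⁻¹ = σE * σE := by decide
    rw [h]; exact mul_mem memE memE
  have h12 : Equiv.swap (1 : Fin 4) 2 ∈ good := by
    have h : Equiv.swap (1 : Fin 4) 2 = σB := by decide
    rw [h]; exact memB
  have h23 : Equiv.swap (2 : Fin 4) 3 ∈ good := by
    have h : Equiv.swap (2 : Fin 4) 3 = σE * σB * σE⁻¹ := by decide
    rw [h]; exact mul_mem (mul_mem memE memB) memE2
  have h13 : Equiv.swap (1 : Fin 4) 3 ∈ good := by
    have h : Equiv.swap (1 : Fin 4) 3 = σE⁻¹ * σB * σE := by decide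
    rw [h]; exact mul_mem (mul_mem memE2 memB) memE
  have h03 : Equiv.swap (0 : Fin 4) 3 ∈ good := by
    have h : Equiv.swap (0 : Fin 4) 3 = σS * σB := by decide
    rw [h]; exact mul_mem memS memB
  have h01 : Equiv.swap (0 : Fin 4) 1 ∈ good := by
    have h : Equiv.swap (0 : Fin 4) 1 =
        Equiv.swap (1 : Fin 4) 3 * Equiv.swap (0 : Fin 4) 3 * Equiv.swap (1 : Fin 4) 3 := by decide
    rw [h]; exact mul_mem (mul_mem h13 h03) h13
  have h02 : Equiv.swap (0 : Fin 4) 2 ∈ good := by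
    have h : Equiv.swap (0 : Fin 4) 2 =
        Equiv.swap (2 : Fin 4) 3 * Equiv.swap (0 : Fin 4) 3 * Equiv.swap (2 : Fin 4) 3 := by decide
    rw [h]; exact mul_mem (mul_mem h23 h03) h23
  intro x y
  fin_cases x <;> fin_cases y <;>
    first
      | (rw [Equiv.swap_self]; exact good.one_mem)
      | exact h01 | exact h02 | exact h03 | exact h12 | exact h13 | exact h23
      | (rw [Equiv.swap_comm]
         first | exact h01 | exact h02 | exact h03 | exact h12 | exact h13 | exact h23)

theorem all_good : ∀ σ : Equiv.Perm (Fin 4), σ ∈ good := by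
  intro σ
  refine Equiv.Perm.swap_induction_on σ good.one_mem ?_
  intro f x y _ hf
  exact mul_mem (swap_good x y) hf

theorem phi_mul : ∀ σ τ : Equiv.Perm (Fin 4), phi (σ * τ) = phi σ * phi τ :=
  fun σ τ => all_good σ τ

set_option maxHeartbeats 4000000 in
theorem phi_orth : ∀ σ : Equiv.Perm (Fin 4), (phi σ).transpose * phi σ = 1 := by decide

set_option maxHeartbeats 4000000 in
theorem phi_inj' : ∀ σ : Equiv.Perm (Fin 4), phi σ = 1 → σ = 1 := by decide

theorem phi_σE : phi σE = !![0,1,0; 0,0,1; 1,0,0] := by decide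
theorem phi_σS : phi σS = !![1,0,0; 0,-1,0; 0,0,-1] := by decide
theorem phi_σB : phi σB = !![-1,0,0; 0,0,-1; 0,-1,0] := by decide

/-- Entrywise coercion `ℤ → ℂ` on 3×3 matrices, as a ring homomorphism. -/
def cmap : Matrix (Fin 3) (Fin 3) ℤ →+* Matrix (Fin 3) (Fin 3) ℂ :=
  (Int.castRingHom ℂ).mapMatrix

theorem cmap_star (A : Matrix (Fin 3) (Fin 3) ℤ) : star (cmap A) = cmap A.transpose := by
  ext i j
  simp [cmap, Matrix.conjTranspose_apply, Matrix.transpose_apply]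

theorem cmap_inj : Function.Injective cmap := by
  intro A B h
  ext i j
  have h2 := congrArg (fun M => M i j) h
  simpa [cmap] using h2

theorem cmap_mem (σ : Equiv.Perm (Fin 4)) :
    cmap (phi σ) ∈ Matrix.unitaryGroup (Fin 3) ℂ := by
  rw [Matrix.mem_unitaryGroup_iff']
  rw [cmap_star, ← map_mul, phi_orth, map_one]

/-- The representation `S₄ → U(3)`. -/
def Φ : Equiv.Perm (Fin 4) →* Matrix.unitaryGroup (Fin 3) ℂ where
  toFun σ := ⟨cmap (phi σ), cmap_mem σ⟩
  map_one' := Subtype.ext (by show cmap (phi 1) = _; rw [phi_one, map_one]; rfl)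
  map_mul' σ τ := Subtype.ext (by show cmap (phi (σ * τ)) = _; rw [phi_mul, map_mul]; rfl)

theorem Φ_inj : Function.Injective Φ := by
  rw [injective_iff_map_eq_one]
  intro σ h
  apply phi_inj'
  apply cmap_inj
  have h2 : (Φ σ : Matrix (Fin 3) (Fin 3) ℂ) = 1 := by rw [h]; rfl
  rw [map_one]
  exact h2

theorem cmap_E : cmap !![0,1,0; 0,0,1; 1,0,0] = E := by
  ext i j
  fin_cases i <;> fin_cases j <;>
    simp [cmap, E, Matrix.vecHead, Matrix.vecTail]

theorem cmap_S : cmap !![1,0,0; 0,-1,0; 0,0,-1] = S₁ := by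
  ext i j
  fin_cases i <;> fin_cases j <;>
    simp [cmap, S₁, Matrix.vecHead, Matrix.vecTail]

theorem cmap_B : cmap !![-1,0,0; 0,0,-1; 0,-1,0] = B := by
  ext i j
  fin_cases i <;> fin_cases j <;>
    simp [cmap, B, Matrix.vecHead, Matrix.vecTail]

/-- The three chosen permutations generate `S₄`. -/
theorem closure_gens : Subgroup.closure {σE, σS, σB} = (⊤ : Subgroup (Equiv.Perm (Fin 4))) := by
  set H := Subgroup.closure {σE, σS, σB} with hH
  have memE : σE ∈ H := Subgroup.subset_closure (by simp)
  have memS : σS ∈ H := Subgroup.subset_closure (by simp)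
  have memB : σB ∈ H := Subgroup.subset_closure (by simp)
  have h12 : Equiv.swap (1 : Fin 4) 2 ∈ H := by
    have h : Equiv.swap (1 : Fin 4) 2 = σB := by decide
    rw [h]; exact memB
  have h23 : Equiv.swap (2 : Fin 4) 3 ∈ H := by
    have h : Equiv.swap (2 : Fin 4) 3 = σE * σB * σE⁻¹ := by decide
    rw [h]; exact mul_mem (mul_mem memE memB) (inv_mem memE)
  have h13 : Equiv.swap (1 : Fin 4) 3 ∈ H := by
    have h : Equiv.swap (1 : Fin 4) 3 = σE⁻¹ * σB * σE := by decide
    rw [h]; exact mul_mem (mul_mem (inv_mem memE) memB) memE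
  have h03 : Equiv.swap (0 : Fin 4) 3 ∈ H := by
    have h : Equiv.swap (0 : Fin 4) 3 = σS * σB := by decide
    rw [h]; exact mul_mem memS memB
  have h01 : Equiv.swap (0 : Fin 4) 1 ∈ H := by
    have h : Equiv.swap (0 : Fin 4) 1 =
        Equiv.swap (1 : Fin 4) 3 * Equiv.swap (0 : Fin 4) 3 * Equiv.swap (1 : Fin 4) 3 := by decide
    rw [h]; exact mul_mem (mul_mem h13 h03) h13
  have h02 : Equiv.swap (0 : Fin 4) 2 ∈ H := by
    have h : Equiv.swap (0 : Fin 4) 2 =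
        Equiv.swap (2 : Fin 4) 3 * Equiv.swap (0 : Fin 4) 3 * Equiv.swap (2 : Fin 4) 3 := by decide
    rw [h]; exact mul_mem (mul_mem h23 h03) h23
  have hswap : ∀ x y : Fin 4, Equiv.swap x y ∈ H := by
    intro x y
    fin_cases x <;> fin_cases y <;>
      first
        | (rw [Equiv.swap_self]; exact H.one_mem)
        | exact h01 | exact h02 | exact h03 | exact h12 | exact h13 | exact h23
        | (rw [Equiv.swap_comm]
           first | exact h01 | exact h02 | exact h03 | exact h12 | exact h13 | exact h23)
  rw [eq_top_iff, ← Equiv.Perm.closure_isSwap, Subgroup.closure_le]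
  rintro σ ⟨x, y, -, rfl⟩
  exact hswap x y

/-- The subgroup of the 3×3 unitary group generated by
`E`, `S₁` and `B` is isomorphic to the symmetric group `S₄`; in particular it
has exactly `24` elements. -/
theorem stmt9 :
    ∃ (hE : E ∈ Matrix.unitaryGroup (Fin 3) ℂ)
      (hS : S₁ ∈ Matrix.unitaryGroup (Fin 3) ℂ)
      (hB : B ∈ Matrix.unitaryGroup (Fin 3) ℂ),
      Nonempty
        ((Subgroup.closure {⟨E, hE⟩, ⟨S₁, hS⟩, ⟨B, hB⟩} :
            Subgroup (Matrix.unitaryGroup (Fin 3) ℂ)) ≃* Equiv.Perm (Fin 4)) ∧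
      Nat.card
        (Subgroup.closure {⟨E, hE⟩, ⟨S₁, hS⟩, ⟨B, hB⟩} :
          Subgroup (Matrix.unitaryGroup (Fin 3) ℂ)) = 24 := by
  classical
  have hE : E ∈ Matrix.unitaryGroup (Fin 3) ℂ := by
    have h := cmap_mem σE; rwa [phi_σE, cmap_E] at h
  have hS : S₁ ∈ Matrix.unitaryGroup (Fin 3) ℂ := by
    have h := cmap_mem σS; rwa [phi_σS, cmap_S] at h
  have hB : B ∈ Matrix.unitaryGroup (Fin 3) ℂ := by
    have h := cmap_mem σB; rwa [phi_σB, cmap_B] at h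
  have hΦE : Φ σE = ⟨E, hE⟩ := by
    exact Subtype.ext (by rw [show ((Φ σE : Matrix.unitaryGroup (Fin 3) ℂ) : Matrix (Fin 3) (Fin 3) ℂ) = cmap (phi σE) from rfl, phi_σE, cmap_E])
  have hΦS : Φ σS = ⟨S₁, hS⟩ := by
    exact Subtype.ext (by rw [show ((Φ σS : Matrix.unitaryGroup (Fin 3) ℂ) : Matrix (Fin 3) (Fin 3) ℂ) = cmap (phi σS) from rfl, phi_σS, cmap_S])
  have hΦB : Φ σB = ⟨B, hB⟩ := by
    exact Subtype.ext (by rw [show ((Φ σB : Matrix.unitaryGroup (Fin 3) ℂ) : Matrix (Fin 3) (Fin 3) ℂ) = cmap (phi σB) from rfl, phi_σB, cmap_B])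
  have hrange : Subgroup.closure {⟨E, hE⟩, ⟨S₁, hS⟩, ⟨B, hB⟩} = Φ.range := by
    rw [MonoidHom.range_eq_map, ← closure_gens, MonoidHom.map_closure]
    congr 1
    rw [Set.image_insert_eq, Set.image_insert_eq, Set.image_singleton, hΦE, hΦS, hΦB]
  have e := (MulEquiv.subgroupCongr hrange).trans (MonoidHom.ofInjective Φ_inj).symm
  refine ⟨hE, hS, hB, ⟨e⟩, ?_⟩
  rw [Nat.card_congr e.toEquiv, Nat.card_eq_fintype_card, Fintype.card_perm, Fintype.card_fin]
  rfl
end
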